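/- Let 𝒴 and 𝒵 be finite types, p a joint probability mass function on 𝒴 × 𝒵 with marginals p_Y, p_Z, and for each z ∈ 𝒵 let q(·|z) be a probability mass function on 𝒴 satisfying q(y|z) > 0 whenever p(y,z) > 0. Then H(Y) + Σ_{(y,z)} p(y,z)·log q(y|z) ≤ I(Y,Z), where H(Y) := −Σ_y p_Y(y)·log p_Y(y) is the Shannon entropy of the marginal and I(Y,Z) is the mutual information; equivalently, the Barber–Agakov quantity H(Y) + E_{p(y,z)}[log q(y|z)] is a lower bound on I(Y,Z). Equality holds when q(y|z) = p(y,z)/p_Z(z) for all (y,z) with p_Z(z) > 0. -/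
import Mathlib


open Finset

/-- Mutual information `I(Y,Z)` of a joint pmf `p` on `Y × Z` with marginals `pY`, `pZ`. -/
noncomputable def mutualInfo {Y Z : Type*} [Fintype Y] [Fintype Z]
    (p : Y × Z → ℝ) (pY : Y → ℝ) (pZ : Z → ℝ) : ℝ :=
  ∑ yz : Y × Z, p yz * Real.log (p yz / (pY yz.1 * pZ yz.2))

/-- Shannon entropy of a pmf on a finite type. -/
noncomputable def shannonEntropy {Y : Type*} [Fintype Y] (pY : Y → ℝ) : ℝ :=
  -∑ y, pY y * Real.log (pY y)

/-- The Barber–Agakov bound: for any model conditional `q(·|z)`,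
`H(Y) + E_{p(y,z)}[log q(y|z)] ≤ I(Y,Z)`, with equality when `q` is the true conditional. -/
theorem barber_agakov_bound {Y Z : Type*} [Fintype Y] [Fintype Z]
    (p : Y × Z → ℝ) (pY : Y → ℝ) (pZ : Z → ℝ) (q : Z → Y → ℝ)
    (hp0 : ∀ yz, 0 ≤ p yz) (hp1 : ∑ yz : Y × Z, p yz = 1)
    (hpY : ∀ y, pY y = ∑ z, p (y, z)) (hpZ : ∀ z, pZ z = ∑ y, p (y, z))
    (hq0 : ∀ z y, 0 ≤ q z y) (hq1 : ∀ z, ∑ y, q z y = 1)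
    (hqpos : ∀ y z, 0 < p (y, z) → 0 < q z y) :
    shannonEntropy pY + (∑ yz : Y × Z, p yz * Real.log (q yz.2 yz.1))
      ≤ mutualInfo p pY pZ ∧
    ((∀ y z, 0 < pZ z → q z y = p (y, z) / pZ z) →
      shannonEntropy pY + (∑ yz : Y × Z, p yz * Real.log (q yz.2 yz.1))
        = mutualInfo p pY pZ) := by
  have hpYpos : ∀ y z, 0 < p (y, z) → 0 < pY y := by
    intro y z h
    rw [hpY]
    exact lt_of_lt_of_le h (Finset.single_le_sum (fun z _ => hp0 (y, z)) (mem_univ z))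
  have hpZpos : ∀ y z, 0 < p (y, z) → 0 < pZ z := by
    intro y z h
    rw [hpZ]
    exact lt_of_lt_of_le h (Finset.single_le_sum (fun y _ => hp0 (y, z)) (mem_univ y))
  -- entropy as a sum over pairs
  have hH : shannonEntropy pY = -∑ yz : Y × Z, p yz * Real.log (pY yz.1) := by
    unfold shannonEntropy
    congr 1
    rw [Fintype.sum_prod_type]
    refine Finset.sum_congr rfl (fun y _ => ?_)
    dsimp only
    rw [← Finset.sum_mul, ← hpY]
  -- the KL term
  set D : ℝ := ∑ yz : Y × Z, p yz * Real.log (p yz / (pZ yz.2 * q yz.2 yz.1)) with hD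
  -- decomposition identity
  have hsplit : mutualInfo p pY pZ
      = shannonEntropy pY + (∑ yz : Y × Z, p yz * Real.log (q yz.2 yz.1)) + D := by
    rw [hH, hD]
    unfold mutualInfo
    rw [neg_add_eq_sub, ← Finset.sum_sub_distrib, ← Finset.sum_add_distrib]
    refine Finset.sum_congr rfl (fun yz _ => ?_)
    obtain ⟨y, z⟩ := yz
    rcases eq_or_lt_of_le (hp0 (y, z)) with h | h
    · simp [← h]
    · have h1 := hpYpos y z h
      have h2 := hpZpos y z h
      have h3 := hqpos y z h
      rw [Real.log_div (ne_of_gt h) (by positivity), Real.log_mul (ne_of_gt h1) (ne_of_gt h2),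
        Real.log_div (ne_of_gt h) (by positivity), Real.log_mul (ne_of_gt h2) (ne_of_gt h3)]
      ring
  -- D ≥ 0
  have hDge : 0 ≤ D := by
    have key : ∀ yz : Y × Z, p yz - pZ yz.2 * q yz.2 yz.1
        ≤ p yz * Real.log (p yz / (pZ yz.2 * q yz.2 yz.1)) := by
      intro ⟨y, z⟩
      rcases eq_or_lt_of_le (hp0 (y, z)) with h | h
      · have hz : 0 ≤ pZ z := by
          rw [hpZ]; exact Finset.sum_nonneg (fun y _ => hp0 (y, z))
        simp only [← h, zero_mul, zero_sub, neg_nonpos]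
        exact mul_nonneg hz (hq0 z y)
      · have h2 := hpZpos y z h
        have h3 := hqpos y z h
        have hr : 0 < pZ z * q z y := by positivity
        have hlog : Real.log (pZ z * q z y / p (y, z)) ≤ pZ z * q z y / p (y, z) - 1 :=
          Real.log_le_sub_one_of_pos (by positivity)
        have : p (y, z) * Real.log (pZ z * q z y / p (y, z)) ≤ pZ z * q z y - p (y, z) := by
          have := mul_le_mul_of_nonneg_left hlog (le_of_lt h)
          calc p (y, z) * Real.log (pZ z * q z y / p (y, z))
              ≤ p (y, z) * (pZ z * q z y / p (y, z) - 1) := this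
            _ = pZ z * q z y - p (y, z) := by field_simp
        have hinv : Real.log (p (y, z) / (pZ z * q z y))
            = -Real.log (pZ z * q z y / p (y, z)) := by
          rw [Real.log_div (ne_of_gt h) (ne_of_gt hr), Real.log_div (ne_of_gt hr) (ne_of_gt h)]
          ring
        rw [hinv]
        nlinarith
    have hsumr : ∑ yz : Y × Z, pZ yz.2 * q yz.2 yz.1 = 1 := by
      rw [Fintype.sum_prod_type_right]
      have : ∀ z : Z, ∑ y, pZ z * q z y = pZ z := by
        intro z; rw [← Finset.mul_sum, hq1, mul_one]
      rw [Finset.sum_congr rfl (fun z _ => this z)]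
      rw [← hp1, Fintype.sum_prod_type_right]
      exact Finset.sum_congr rfl (fun z _ => hpZ z)
    calc (0 : ℝ) = 1 - 1 := by ring
      _ = ∑ yz : Y × Z, p yz - ∑ yz : Y × Z, pZ yz.2 * q yz.2 yz.1 := by rw [hp1, hsumr]
      _ = ∑ yz : Y × Z, (p yz - pZ yz.2 * q yz.2 yz.1) := by rw [Finset.sum_sub_distrib]
      _ ≤ D := Finset.sum_le_sum (fun yz _ => key yz)
  constructor
  · rw [hsplit]; linarith
  · intro heq
    rw [hsplit]
    have : D = 0 := by
      rw [hD]
      apply Finset.sum_eq_zero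
      intro ⟨y, z⟩ _
      rcases eq_or_lt_of_le (hp0 (y, z)) with h | h
      · rw [← h, zero_mul]
      · have h2 := hpZpos y z h
        rw [heq y z h2]
        have : pZ z * (p (y, z) / pZ z) = p (y, z) := by field_simp
        rw [this, div_self (ne_of_gt h), Real.log_one, mul_zero]
    rw [this]; ring
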